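/- For n i.i.d. uniform random variables on [0,1], the probability that the first draw is at least k but is not the maximum of all n draws (a 'false positive') equals (n-1)/n - k + k^n/n. -/

import Mathlib

open MeasureTheory

/-- For `n` i.i.d. uniform random variables on `[0,1]`, the probability that the first draw
is at least `k` but is not the maximum of all `n` draws (a false positive), i.e. some other
draw strictly exceeds it, equals `(n-1)/n - k + k^n/n`. -/
theorem false_positive_round_one_prob (n : ℕ) (hn : 0 < n) (k : ℝ)
    (hk : k ∈ Set.Icc (0 : ℝ) 1) :
    (Measure.pi fun _ : Fin n => (volume : Measure ℝ).restrict (Set.Icc 0 1))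
      {a | k ≤ a ⟨0, hn⟩ ∧ ∃ i, a ⟨0, hn⟩ < a i}
      = ENNReal.ofReal (((n : ℝ) - 1) / n - k + k ^ n / n) := by
  obtain ⟨m, rfl⟩ := Nat.exists_eq_succ_of_ne_zero hn.ne'
  obtain ⟨hk0, hk1⟩ := hk
  set ν : Measure ℝ := (volume : Measure ℝ).restrict (Set.Icc 0 1) with hν
  haveI : IsProbabilityMeasure ν := ⟨by simp [hν, Real.volume_Icc]⟩
  set T : Set (ℝ × (Fin m → ℝ)) := {p | k ≤ p.1 ∧ ∃ j, p.1 < p.2 j} with hT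
  have hTm : MeasurableSet T := by
    have : T = {p : ℝ × (Fin m → ℝ) | k ≤ p.1} ∩ ⋃ j, {p : ℝ × (Fin m → ℝ) | p.1 < p.2 j} := by
      ext p; simp [hT]
    rw [this]
    exact (measurableSet_le measurable_const measurable_fst).inter
      (MeasurableSet.iUnion fun j => measurableSet_lt measurable_fst
        ((measurable_pi_apply j).comp measurable_snd))
  have hpre : {a : Fin (m+1) → ℝ | k ≤ a ⟨0, Nat.succ_pos m⟩ ∧ ∃ i, a ⟨0, Nat.succ_pos m⟩ < a i}
      = (MeasurableEquiv.piFinSuccAbove (fun _ => ℝ) 0) ⁻¹' T := by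
    ext a
    simp only [Set.mem_preimage, Set.mem_setOf_eq, hT]
    constructor
    · rintro ⟨h1, i, h2⟩
      refine ⟨h1, ?_⟩
      rcases Fin.eq_zero_or_eq_succ i with rfl | ⟨j, rfl⟩
      · exact absurd h2 (lt_irrefl _)
      · exact ⟨j, h2⟩
    · rintro ⟨h1, j, h2⟩
      exact ⟨h1, j.succ, h2⟩
  rw [show (⟨0, hn⟩ : Fin (m+1)) = ⟨0, Nat.succ_pos m⟩ from rfl, hpre,
    (measurePreserving_piFinSuccAbove (fun _ : Fin (m+1) => ν) 0).measure_preimage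
      hTm.nullMeasurableSet]
  rw [Measure.prod_apply hTm]
  have hkey : ∀ x ∈ Set.Icc (0:ℝ) 1,
      (Measure.pi fun _ : Fin m => ν) (Prod.mk x ⁻¹' T)
        = Set.indicator (Set.Ici k) (fun x => 1 - ENNReal.ofReal x ^ m) x := by
    intro x hx
    by_cases hkx : k ≤ x
    · rw [Set.indicator_of_mem (Set.mem_Ici.mpr hkx)]
      have hsec : Prod.mk x ⁻¹' T = (Set.pi Set.univ fun _ : Fin m => Set.Iic x)ᶜ := by
        ext y
        simp only [Set.mem_preimage, Set.mem_compl_iff, Set.mem_univ_pi, Set.mem_Iic, hT,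
          Set.mem_setOf_eq, not_forall, not_le]
        exact ⟨fun h => h.2, fun h => ⟨hkx, h⟩⟩
      rw [hsec, prob_compl_eq_one_sub (MeasurableSet.univ_pi fun _ => measurableSet_Iic),
        Measure.pi_pi]
      have : ν (Set.Iic x) = ENNReal.ofReal x := by
        rw [hν, Measure.restrict_apply measurableSet_Iic,
          show Set.Iic x ∩ Set.Icc 0 1 = Set.Icc 0 x by
            ext t; simp only [Set.mem_inter_iff, Set.mem_Iic, Set.mem_Icc]
            exact ⟨fun h => ⟨h.2.1, h.1⟩, fun h => ⟨h.2, h.1, h.2.trans hx.2⟩⟩,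
          Real.volume_Icc, sub_zero]
      simp [this]
    · rw [Set.indicator_of_notMem (by simpa using hkx)]
      have : Prod.mk x ⁻¹' T = ∅ := by
        ext y; simp [hT, hkx]
      simp [this]
  have h1 : ∫⁻ x, (Measure.pi fun _ : Fin m => ν) (Prod.mk x ⁻¹' T) ∂ν
      = ∫⁻ x in Set.Icc k 1, (1 - ENNReal.ofReal x ^ m) ∂volume := by
    rw [hν, setLIntegral_congr_fun measurableSet_Icc hkey,
      lintegral_indicator (measurableSet_Ici), Measure.restrict_restrict measurableSet_Ici,
      show Set.Ici k ∩ Set.Icc 0 1 = Set.Icc k 1 by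
        ext t; simp only [Set.mem_inter_iff, Set.mem_Ici, Set.mem_Icc]
        exact ⟨fun h => ⟨h.1, h.2.2⟩, fun h => ⟨h.1, hk0.trans h.1, h.2⟩⟩]
  rw [h1]
  have h2 : ∫⁻ x in Set.Icc k 1, (1 - ENNReal.ofReal x ^ m) ∂volume
      = ∫⁻ x in Set.Icc k 1, ENNReal.ofReal (1 - x ^ m) ∂volume := by
    apply setLIntegral_congr_fun measurableSet_Icc
    intro x hx
    have hx0 : (0:ℝ) ≤ x := hk0.trans hx.1
    beta_reduce
    rw [ENNReal.ofReal_sub _ (pow_nonneg hx0 m), ← ENNReal.ofReal_pow hx0,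
      ENNReal.ofReal_one]
  rw [h2, ← ofReal_integral_eq_lintegral_ofReal]
  · congr 1
    rw [MeasureTheory.integral_Icc_eq_integral_Ioc,
      ← intervalIntegral.integral_of_le (hk1 : k ≤ 1),
      intervalIntegral.integral_sub intervalIntegrable_const
        (intervalIntegral.intervalIntegrable_pow m),
      intervalIntegral.integral_const, integral_pow]
    have hm : ((m:ℝ) + 1) ≠ 0 := by positivity
    push_cast
    field_simp
    ring
  · exact (continuous_const.sub (continuous_pow m)).integrableOn_Icc
  · rw [Filter.EventuallyLE, ae_restrict_iff' measurableSet_Icc]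
    apply Filter.Eventually.of_forall
    intro x hx
    simp only [Pi.zero_apply, sub_nonneg]
    exact pow_le_one₀ (hk0.trans hx.1) hx.2
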